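/- For every α ≥ 0 and a ∈ ℝ, the 7-dimensional Lie algebra with structure equations de¹ = α e^{15}+e^{35}−a e^{37}, de² = −α e^{25}+e^{45}−a e^{47}, de³ = −e^{15}+α e^{35}+a e^{17}, de⁴ = −e^{25}−α e^{45}+a e^{27}, de⁵ = de⁶ = de⁷ = 0 satisfies d² = 0, and the 3-form φ = e^{127}+e^{347}+e^{567}+e^{135}−e^{146}−e^{236}−e^{245} is closed on it. -/
import Mathlib


open Finset BigOperators

/-- Kronecker delta as a real number. -/
def kd {n : ℕ} (a i : Fin n) : ℝ := if a = i then 1 else 0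

/-- The 2-form `e^a ∧ e^b` evaluated on basis vectors `e_i, e_j`. -/
def pairF {n : ℕ} (a b i j : Fin n) : ℝ := kd a i * kd b j - kd a j * kd b i

/-- The 3-form `e^a ∧ e^b ∧ e^c` evaluated on basis vectors. -/
def tripF {n : ℕ} (a b c i j k : Fin n) : ℝ :=
  Matrix.det !![kd a i, kd a j, kd a k; kd b i, kd b j, kd b k; kd c i, kd c j, kd c k]

/-- The 4-form `e^a ∧ e^b ∧ e^c ∧ e^d` evaluated on basis vectors. -/
def quadF {n : ℕ} (a b c d i j k l : Fin n) : ℝ :=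
  Matrix.det !![kd a i, kd a j, kd a k, kd a l;
                kd b i, kd b j, kd b k, kd b l;
                kd c i, kd c j, kd c k, kd c l;
                kd d i, kd d j, kd d k, kd d l]

/-- Chevalley–Eilenberg differential of a 2-form, on basis vectors.
`br i a b` is the coefficient of `e_i` in `[e_a, e_b]`. -/
def d2 {n : ℕ} (br : Fin n → Fin n → Fin n → ℝ) (α : Fin n → Fin n → ℝ)
    (a b c : Fin n) : ℝ :=
  -(∑ m, br m a b * α m c) + (∑ m, br m a c * α m b) - (∑ m, br m b c * α m a)

/-- Chevalley–Eilenberg differential of a 3-form, on basis vectors. -/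
def d3 {n : ℕ} (br : Fin n → Fin n → Fin n → ℝ) (α : Fin n → Fin n → Fin n → ℝ)
    (a b c d : Fin n) : ℝ :=
  -(∑ m, br m a b * α m c d) + (∑ m, br m a c * α m b d) - (∑ m, br m a d * α m b c)
  - (∑ m, br m b c * α m a d) + (∑ m, br m b d * α m a c) - (∑ m, br m c d * α m a b)

/-- Chevalley–Eilenberg differential of a 4-form, on basis vectors. -/
def d4 {n : ℕ} (br : Fin n → Fin n → Fin n → ℝ)
    (α : Fin n → Fin n → Fin n → Fin n → ℝ) (a b c d e : Fin n) : ℝ :=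
  -(∑ m, br m a b * α m c d e) + (∑ m, br m a c * α m b d e) - (∑ m, br m a d * α m b c e)
  + (∑ m, br m a e * α m b c d) - (∑ m, br m b c * α m a d e) + (∑ m, br m b d * α m a c e)
  - (∑ m, br m b e * α m a c d) - (∑ m, br m c d * α m a b e) + (∑ m, br m c e * α m a b d)
  - (∑ m, br m d e * α m a b c)

/-- Wedge product of two 2-forms, evaluated on basis vectors. -/
def w22 {n : ℕ} (α β : Fin n → Fin n → ℝ) (i j k l : Fin n) : ℝ :=
  α i j * β k l - α i k * β j l + α i l * β j k
  + α j k * β i l - α j l * β i k + α k l * β i j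

/-- Wedge product of a 2-form and a 1-form, evaluated on basis vectors. -/
def w21 {n : ℕ} (α : Fin n → Fin n → ℝ) (β : Fin n → ℝ) (i j k : Fin n) : ℝ :=
  α i j * β k - α i k * β j + α j k * β i

/-- Wedge product of a 3-form and a 1-form, evaluated on basis vectors. -/
def w31 {n : ℕ} (α : Fin n → Fin n → Fin n → ℝ) (β : Fin n → ℝ) (i j k l : Fin n) : ℝ :=
  α i j k * β l - α i j l * β k + α i k l * β j - α j k l * β i

/-- `ω = e^{12} + e^{34} + e^{56}` (0-indexed). -/
def omega6 : Fin 6 → Fin 6 → ℝ := fun i j => pairF 0 1 i j + pairF 2 3 i j + pairF 4 5 i j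

/-- `ψ₊ = e^{135} − e^{146} − e^{236} − e^{245}` (0-indexed). -/
def psi6 : Fin 6 → Fin 6 → Fin 6 → ℝ := fun i j k =>
  tripF 0 2 4 i j k - tripF 0 3 5 i j k - tripF 1 2 5 i j k - tripF 1 3 4 i j k

/-- `ω` viewed on a 7-dimensional space (indices 0..5). -/
def omega7 : Fin 7 → Fin 7 → ℝ := fun i j => pairF 0 1 i j + pairF 2 3 i j + pairF 4 5 i j

/-- `ψ₊` viewed on a 7-dimensional space. -/
def psi7 : Fin 7 → Fin 7 → Fin 7 → ℝ := fun i j k =>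
  tripF 0 2 4 i j k - tripF 0 3 5 i j k - tripF 1 2 5 i j k - tripF 1 3 4 i j k

/-- `η = e^7`, the 1-form dual to the extra direction. -/
def eta7 : Fin 7 → ℝ := kd 6

/-- The real 6×6 representation of a complex 3×3 matrix: each entry `a+bi`
becomes the 2×2 block `[[a, b], [−b, a]]`. -/
def realRep (A : Matrix (Fin 3) (Fin 3) ℂ) : Matrix (Fin 6) (Fin 6) ℝ :=
  Matrix.of fun i j =>
    let p : Fin 3 := ⟨(i : ℕ) / 2, by have := i.isLt; omega⟩
    let q : Fin 3 := ⟨(j : ℕ) / 2, by have := j.isLt; omega⟩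
    if (i : ℕ) % 2 = 0 then
      (if (j : ℕ) % 2 = 0 then (A p q).re else (A p q).im)
    else
      (if (j : ℕ) % 2 = 0 then -(A p q).im else (A p q).re)

/-- Structure constants of the semidirect sum `g = h ⊕_D ℝξ`, where `f` are the
structure constants of `h` ( `f i a b` = coefficient of `e_i` in `[e_a,e_b]` ),
`ξ = e₇` and `[ξ, U] = D U`. -/
def brg (f : Fin 6 → Fin 6 → Fin 6 → ℝ) (D : Matrix (Fin 6) (Fin 6) ℝ) :
    Fin 7 → Fin 7 → Fin 7 → ℝ := fun i a b =>
  if hi : (i : ℕ) < 6 then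
    if ha : (a : ℕ) < 6 then
      if hb : (b : ℕ) < 6 then f ⟨i, hi⟩ ⟨a, ha⟩ ⟨b, hb⟩
      else -(D ⟨i, hi⟩ ⟨a, ha⟩)
    else
      if hb : (b : ℕ) < 6 then D ⟨i, hi⟩ ⟨b, hb⟩ else 0
  else 0

/-- Structure constants of `(g_{5,17}^{α,−α,1} ⊕ ℝ) ⊕_D ℝe₇` for parameters `α, a`. -/
def bb19 (al a : ℝ) : Fin 7 → Fin 7 → Fin 7 → ℝ := fun i x y =>
  if i = 0 ∧ x = 0 ∧ y = 4 then -al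
  else if i = 0 ∧ x = 2 ∧ y = 4 then -1
  else if i = 0 ∧ x = 2 ∧ y = 6 then a
  else if i = 1 ∧ x = 1 ∧ y = 4 then al
  else if i = 1 ∧ x = 3 ∧ y = 4 then -1
  else if i = 1 ∧ x = 3 ∧ y = 6 then a
  else if i = 2 ∧ x = 0 ∧ y = 4 then 1
  else if i = 2 ∧ x = 2 ∧ y = 4 then -al
  else if i = 2 ∧ x = 0 ∧ y = 6 then -a
  else if i = 3 ∧ x = 1 ∧ y = 4 then 1
  else if i = 3 ∧ x = 3 ∧ y = 4 then al
  else if i = 3 ∧ x = 1 ∧ y = 6 then -a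
  else 0

def br19 (al a : ℝ) : Fin 7 → Fin 7 → Fin 7 → ℝ := fun i x y =>
  bb19 al a i x y - bb19 al a i y x

def phi19 : Fin 7 → Fin 7 → Fin 7 → ℝ := fun i j k =>
  tripF 0 1 6 i j k + tripF 2 3 6 i j k + tripF 4 5 6 i j k + psi7 i j k


/-- Integer Kronecker delta. -/
def kdZ {n : ℕ} (a i : Fin n) : ℤ := if a = i then 1 else 0

def tripZ (a b c i j k : Fin 7) : ℤ :=
  kdZ a i * (kdZ b j * kdZ c k - kdZ b k * kdZ c j)
  - kdZ a j * (kdZ b i * kdZ c k - kdZ b k * kdZ c i)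
  + kdZ a k * (kdZ b i * kdZ c j - kdZ b j * kdZ c i)

def phiZ : Fin 7 → Fin 7 → Fin 7 → ℤ := fun i j k =>
  tripZ 0 1 6 i j k + tripZ 2 3 6 i j k + tripZ 4 5 6 i j k
  + tripZ 0 2 4 i j k - tripZ 0 3 5 i j k - tripZ 1 2 5 i j k - tripZ 1 3 4 i j k

def cb0 : Fin 7 → Fin 7 → Fin 7 → ℤ := fun i x y =>
  if i = 0 ∧ x = 0 ∧ y = 4 then 0
  else if i = 0 ∧ x = 2 ∧ y = 4 then -1
  else if i = 0 ∧ x = 2 ∧ y = 6 then 0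
  else if i = 1 ∧ x = 1 ∧ y = 4 then 0
  else if i = 1 ∧ x = 3 ∧ y = 4 then -1
  else if i = 1 ∧ x = 3 ∧ y = 6 then 0
  else if i = 2 ∧ x = 0 ∧ y = 4 then 1
  else if i = 2 ∧ x = 2 ∧ y = 4 then 0
  else if i = 2 ∧ x = 0 ∧ y = 6 then 0
  else if i = 3 ∧ x = 1 ∧ y = 4 then 1
  else if i = 3 ∧ x = 3 ∧ y = 4 then 0
  else if i = 3 ∧ x = 1 ∧ y = 6 then 0
  else 0

def cb1 : Fin 7 → Fin 7 → Fin 7 → ℤ := fun i x y =>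
  if i = 0 ∧ x = 0 ∧ y = 4 then -1
  else if i = 0 ∧ x = 2 ∧ y = 4 then 0
  else if i = 0 ∧ x = 2 ∧ y = 6 then 0
  else if i = 1 ∧ x = 1 ∧ y = 4 then 1
  else if i = 1 ∧ x = 3 ∧ y = 4 then 0
  else if i = 1 ∧ x = 3 ∧ y = 6 then 0
  else if i = 2 ∧ x = 0 ∧ y = 4 then 0
  else if i = 2 ∧ x = 2 ∧ y = 4 then -1
  else if i = 2 ∧ x = 0 ∧ y = 6 then 0
  else if i = 3 ∧ x = 1 ∧ y = 4 then 0
  else if i = 3 ∧ x = 3 ∧ y = 4 then 1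
  else if i = 3 ∧ x = 1 ∧ y = 6 then 0
  else 0

def cb2 : Fin 7 → Fin 7 → Fin 7 → ℤ := fun i x y =>
  if i = 0 ∧ x = 0 ∧ y = 4 then 0
  else if i = 0 ∧ x = 2 ∧ y = 4 then 0
  else if i = 0 ∧ x = 2 ∧ y = 6 then 1
  else if i = 1 ∧ x = 1 ∧ y = 4 then 0
  else if i = 1 ∧ x = 3 ∧ y = 4 then 0
  else if i = 1 ∧ x = 3 ∧ y = 6 then 1
  else if i = 2 ∧ x = 0 ∧ y = 4 then 0
  else if i = 2 ∧ x = 2 ∧ y = 4 then 0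
  else if i = 2 ∧ x = 0 ∧ y = 6 then -1
  else if i = 3 ∧ x = 1 ∧ y = 4 then 0
  else if i = 3 ∧ x = 3 ∧ y = 4 then 0
  else if i = 3 ∧ x = 1 ∧ y = 6 then -1
  else 0

def c0 : Fin 7 → Fin 7 → Fin 7 → ℤ := fun i x y => cb0 i x y - cb0 i y x
def c1 : Fin 7 → Fin 7 → Fin 7 → ℤ := fun i x y => cb1 i x y - cb1 i y x
def c2 : Fin 7 → Fin 7 → Fin 7 → ℤ := fun i x y => cb2 i x y - cb2 i y x

lemma br19_eq (al a : ℝ) (i x y : Fin 7) :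
    br19 al a i x y = (c0 i x y : ℝ) + al * (c1 i x y : ℝ) + a * (c2 i x y : ℝ) := by
  by_cases h0 : i = 0 ∧ x = 0 ∧ y = 4
  · obtain ⟨rfl, rfl, rfl⟩ := h0
    simp (config := { decide := true }) only [br19, bb19, c0, c1, c2, cb0, cb1, cb2]
    push_cast
    ring
  by_cases h1 : i = 0 ∧ y = 0 ∧ x = 4
  · obtain ⟨rfl, rfl, rfl⟩ := h1
    simp (config := { decide := true }) only [br19, bb19, c0, c1, c2, cb0, cb1, cb2]
    push_cast
    ring
  by_cases h2 : i = 0 ∧ x = 2 ∧ y = 4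
  · obtain ⟨rfl, rfl, rfl⟩ := h2
    simp (config := { decide := true }) only [br19, bb19, c0, c1, c2, cb0, cb1, cb2]
    push_cast
    ring
  by_cases h3 : i = 0 ∧ y = 2 ∧ x = 4
  · obtain ⟨rfl, rfl, rfl⟩ := h3
    simp (config := { decide := true }) only [br19, bb19, c0, c1, c2, cb0, cb1, cb2]
    push_cast
    ring
  by_cases h4 : i = 0 ∧ x = 2 ∧ y = 6
  · obtain ⟨rfl, rfl, rfl⟩ := h4
    simp (config := { decide := true }) only [br19, bb19, c0, c1, c2, cb0, cb1, cb2]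
    push_cast
    ring
  by_cases h5 : i = 0 ∧ y = 2 ∧ x = 6
  · obtain ⟨rfl, rfl, rfl⟩ := h5
    simp (config := { decide := true }) only [br19, bb19, c0, c1, c2, cb0, cb1, cb2]
    push_cast
    ring
  by_cases h6 : i = 1 ∧ x = 1 ∧ y = 4
  · obtain ⟨rfl, rfl, rfl⟩ := h6
    simp (config := { decide := true }) only [br19, bb19, c0, c1, c2, cb0, cb1, cb2]
    push_cast
    ring
  by_cases h7 : i = 1 ∧ y = 1 ∧ x = 4
  · obtain ⟨rfl, rfl, rfl⟩ := h7
    simp (config := { decide := true }) only [br19, bb19, c0, c1, c2, cb0, cb1, cb2]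
    push_cast
    ring
  by_cases h8 : i = 1 ∧ x = 3 ∧ y = 4
  · obtain ⟨rfl, rfl, rfl⟩ := h8
    simp (config := { decide := true }) only [br19, bb19, c0, c1, c2, cb0, cb1, cb2]
    push_cast
    ring
  by_cases h9 : i = 1 ∧ y = 3 ∧ x = 4
  · obtain ⟨rfl, rfl, rfl⟩ := h9
    simp (config := { decide := true }) only [br19, bb19, c0, c1, c2, cb0, cb1, cb2]
    push_cast
    ring
  by_cases h10 : i = 1 ∧ x = 3 ∧ y = 6
  · obtain ⟨rfl, rfl, rfl⟩ := h10
    simp (config := { decide := true }) only [br19, bb19, c0, c1, c2, cb0, cb1, cb2]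
    push_cast
    ring
  by_cases h11 : i = 1 ∧ y = 3 ∧ x = 6
  · obtain ⟨rfl, rfl, rfl⟩ := h11
    simp (config := { decide := true }) only [br19, bb19, c0, c1, c2, cb0, cb1, cb2]
    push_cast
    ring
  by_cases h12 : i = 2 ∧ x = 0 ∧ y = 4
  · obtain ⟨rfl, rfl, rfl⟩ := h12
    simp (config := { decide := true }) only [br19, bb19, c0, c1, c2, cb0, cb1, cb2]
    push_cast
    ring
  by_cases h13 : i = 2 ∧ y = 0 ∧ x = 4
  · obtain ⟨rfl, rfl, rfl⟩ := h13
    simp (config := { decide := true }) only [br19, bb19, c0, c1, c2, cb0, cb1, cb2]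
    push_cast
    ring
  by_cases h14 : i = 2 ∧ x = 2 ∧ y = 4
  · obtain ⟨rfl, rfl, rfl⟩ := h14
    simp (config := { decide := true }) only [br19, bb19, c0, c1, c2, cb0, cb1, cb2]
    push_cast
    ring
  by_cases h15 : i = 2 ∧ y = 2 ∧ x = 4
  · obtain ⟨rfl, rfl, rfl⟩ := h15
    simp (config := { decide := true }) only [br19, bb19, c0, c1, c2, cb0, cb1, cb2]
    push_cast
    ring
  by_cases h16 : i = 2 ∧ x = 0 ∧ y = 6
  · obtain ⟨rfl, rfl, rfl⟩ := h16
    simp (config := { decide := true }) only [br19, bb19, c0, c1, c2, cb0, cb1, cb2]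
    push_cast
    ring
  by_cases h17 : i = 2 ∧ y = 0 ∧ x = 6
  · obtain ⟨rfl, rfl, rfl⟩ := h17
    simp (config := { decide := true }) only [br19, bb19, c0, c1, c2, cb0, cb1, cb2]
    push_cast
    ring
  by_cases h18 : i = 3 ∧ x = 1 ∧ y = 4
  · obtain ⟨rfl, rfl, rfl⟩ := h18
    simp (config := { decide := true }) only [br19, bb19, c0, c1, c2, cb0, cb1, cb2]
    push_cast
    ring
  by_cases h19 : i = 3 ∧ y = 1 ∧ x = 4
  · obtain ⟨rfl, rfl, rfl⟩ := h19
    simp (config := { decide := true }) only [br19, bb19, c0, c1, c2, cb0, cb1, cb2]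
    push_cast
    ring
  by_cases h20 : i = 3 ∧ x = 3 ∧ y = 4
  · obtain ⟨rfl, rfl, rfl⟩ := h20
    simp (config := { decide := true }) only [br19, bb19, c0, c1, c2, cb0, cb1, cb2]
    push_cast
    ring
  by_cases h21 : i = 3 ∧ y = 3 ∧ x = 4
  · obtain ⟨rfl, rfl, rfl⟩ := h21
    simp (config := { decide := true }) only [br19, bb19, c0, c1, c2, cb0, cb1, cb2]
    push_cast
    ring
  by_cases h22 : i = 3 ∧ x = 1 ∧ y = 6
  · obtain ⟨rfl, rfl, rfl⟩ := h22
    simp (config := { decide := true }) only [br19, bb19, c0, c1, c2, cb0, cb1, cb2]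
    push_cast
    ring
  by_cases h23 : i = 3 ∧ y = 1 ∧ x = 6
  · obtain ⟨rfl, rfl, rfl⟩ := h23
    simp (config := { decide := true }) only [br19, bb19, c0, c1, c2, cb0, cb1, cb2]
    push_cast
    ring
  simp only [br19, bb19, c0, c1, c2, cb0, cb1, cb2, h0, h1, h2, h3, h4, h5, h6, h7, h8, h9, h10, h11, h12, h13, h14, h15, h16, h17, h18, h19, h20, h21, h22, h23, if_false, and_self,
    and_false, false_and, eq_self_iff_true]
  norm_num

lemma kd_cast {n : ℕ} (a i : Fin n) : kd a i = ((kdZ a i : ℤ) : ℝ) := by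
  simp only [kd, kdZ]; split_ifs <;> simp

lemma phi19_cast (i j k : Fin 7) : phi19 i j k = ((phiZ i j k : ℤ) : ℝ) := by
  simp only [phi19, psi7, tripF, phiZ, tripZ, Matrix.det_fin_three,
    Matrix.cons_val', Matrix.cons_val_zero, Matrix.cons_val_one, Matrix.head_cons,
    Matrix.empty_val', Matrix.cons_val_fin_one, Matrix.head_fin_const,
    Matrix.of_apply, Matrix.cons_val_two, Matrix.tail_cons, kd_cast]
  push_cast
  ring

def S7 (f : Fin 7 → ℤ) : ℤ := f 0 + f 1 + f 2 + f 3 + f 4 + f 5 + f 6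

def J2 (p q : Fin 7 → Fin 7 → Fin 7 → ℤ) (i x y z : Fin 7) : ℤ :=
  S7 (fun m => p m x y * q i m z) - S7 (fun m => p m x z * q i m y)
  + S7 (fun m => p m y z * q i m x)

def J3 (p : Fin 7 → Fin 7 → Fin 7 → ℤ) (w x y z : Fin 7) : ℤ :=
  -S7 (fun m => p m w x * phiZ m y z) + S7 (fun m => p m w y * phiZ m x z)
  - S7 (fun m => p m w z * phiZ m x y) - S7 (fun m => p m x y * phiZ m w z)
  + S7 (fun m => p m x z * phiZ m w y) - S7 (fun m => p m y z * phiZ m w x)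

set_option maxHeartbeats 1000000 in
lemma L2 : ∀ i x y z : Fin 7,
    J2 c0 c0 i x y z = 0 ∧ J2 c0 c1 i x y z + J2 c1 c0 i x y z = 0 ∧
    J2 c0 c2 i x y z + J2 c2 c0 i x y z = 0 ∧ J2 c1 c1 i x y z = 0 ∧
    J2 c1 c2 i x y z + J2 c2 c1 i x y z = 0 ∧ J2 c2 c2 i x y z = 0 := by decide

set_option maxHeartbeats 1000000 in
lemma L3 : ∀ w x y z : Fin 7,
    J3 c0 w x y z = 0 ∧ J3 c1 w x y z = 0 ∧ J3 c2 w x y z = 0 := by decide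

set_option maxHeartbeats 4000000 in
theorem stmt_19 (al a : ℝ) (hal : 0 ≤ al) :
    (∀ i x y z : Fin 7, d2 (br19 al a) (fun u v => -(br19 al a i u v)) x y z = 0) ∧
    (∀ w x y z : Fin 7, d3 (br19 al a) phi19 w x y z = 0) := by
  constructor
  · intro i x y z
    obtain ⟨h1, h2, h3, h4, h5, h6⟩ := L2 i x y z
    have H1 : ((J2 c0 c0 i x y z : ℤ) : ℝ) = 0 := by rw [h1]; norm_num
    have H2 : ((J2 c0 c1 i x y z + J2 c1 c0 i x y z : ℤ) : ℝ) = 0 := by rw [h2]; norm_num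
    have H3 : ((J2 c0 c2 i x y z + J2 c2 c0 i x y z : ℤ) : ℝ) = 0 := by rw [h3]; norm_num
    have H4 : ((J2 c1 c1 i x y z : ℤ) : ℝ) = 0 := by rw [h4]; norm_num
    have H5 : ((J2 c1 c2 i x y z + J2 c2 c1 i x y z : ℤ) : ℝ) = 0 := by rw [h5]; norm_num
    have H6 : ((J2 c2 c2 i x y z : ℤ) : ℝ) = 0 := by rw [h6]; norm_num
    simp only [J2, S7] at H1 H2 H3 H4 H5 H6
    push_cast at H1 H2 H3 H4 H5 H6
    simp only [d2, br19_eq, Fin.sum_univ_seven]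
    linear_combination H1 + al * H2 + a * H3 + al ^ 2 * H4 + al * a * H5 + a ^ 2 * H6
  · intro w x y z
    obtain ⟨h1, h2, h3⟩ := L3 w x y z
    have H1 : ((J3 c0 w x y z : ℤ) : ℝ) = 0 := by rw [h1]; norm_num
    have H2 : ((J3 c1 w x y z : ℤ) : ℝ) = 0 := by rw [h2]; norm_num
    have H3 : ((J3 c2 w x y z : ℤ) : ℝ) = 0 := by rw [h3]; norm_num
    simp only [J3, S7] at H1 H2 H3
    push_cast at H1 H2 H3
    simp only [d3, br19_eq, phi19_cast, Fin.sum_univ_seven]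
    linear_combination H1 + al * H2 + a * H3
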